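/- Let x ∈ ℝ³ with ‖x‖ = 1, n⃗ = x, Π = I − xxᵀ, and a positive definite 3×3 matrix. Set n_a = x/‖x‖_a where ‖x‖_a² = xᵀa⁻¹x. Then for any v in the tangent space {v : ⟨v,x⟩ = 0}, the a-norm minimizer Π⁻¹v of {u : Πu = v} is given explicitly by Π⁻¹v = v − ⟨v, n_a⟩_a n_a, and consequently ‖Π⁻¹v‖_a² = ‖v‖_a² − (⟨n_a, v⟩_a)². -/

import Mathlib

open Matrix

/-- The `a`-weighted inner product `⟨u,v⟩_a = uᵀ a⁻¹ v`. -/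
noncomputable def ainner {n : ℕ} (a : Matrix (Fin n) (Fin n) ℝ) (u v : Fin n → ℝ) : ℝ :=
  u ⬝ᵥ (a⁻¹ *ᵥ v)

/-- The `a`-weighted norm `‖u‖_a = √(uᵀ a⁻¹ u)`. -/
noncomputable def anorm {n : ℕ} (a : Matrix (Fin n) (Fin n) ℝ) (u : Fin n → ℝ) : ℝ :=
  Real.sqrt (ainner a u u)

/-- `ustar` minimizes the `a`-norm over the affine set `{u : Π u = v}`. -/
def IsAMinimizer {n : ℕ} (P a : Matrix (Fin n) (Fin n) ℝ) (v ustar : Fin n → ℝ) : Prop :=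
  P *ᵥ ustar = v ∧ ∀ u : Fin n → ℝ, P *ᵥ u = v → anorm a ustar ≤ anorm a u

section aux

variable {n : ℕ} {a : Matrix (Fin n) (Fin n) ℝ}

lemma ainner_symm (haSymm : a.IsSymm) (u w : Fin n → ℝ) :
    ainner a u w = ainner a w u := by
  unfold ainner
  rw [dotProduct_comm, dotProduct_mulVec, ← mulVec_transpose,
    Matrix.transpose_nonsing_inv, haSymm.eq]

lemma ainner_pos (ha : a.PosDef) {u : Fin n → ℝ} (hu : u ≠ 0) :
    0 < ainner a u u := by
  have := ha.inv.dotProduct_mulVec_pos hu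
  simpa [ainner] using this

lemma ainner_nonneg (ha : a.PosDef) (u : Fin n → ℝ) :
    0 ≤ ainner a u u := by
  rcases eq_or_ne u 0 with rfl | hu
  · simp [ainner]
  · exact (ainner_pos ha hu).le

lemma ainner_sub_left (u w z : Fin n → ℝ) :
    ainner a (u - w) z = ainner a u z - ainner a w z := by
  simp [ainner, sub_dotProduct]

lemma ainner_sub_right (u w z : Fin n → ℝ) :
    ainner a u (w - z) = ainner a u w - ainner a u z := by
  simp [ainner, mulVec_sub]

lemma ainner_add_left (u w z : Fin n → ℝ) :
    ainner a (u + w) z = ainner a u z + ainner a w z := by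
  simp [ainner, add_dotProduct]

lemma ainner_smul_left (c : ℝ) (u z : Fin n → ℝ) :
    ainner a (c • u) z = c * ainner a u z := by
  simp [ainner, smul_dotProduct]

lemma ainner_smul_right (c : ℝ) (u z : Fin n → ℝ) :
    ainner a u (c • z) = c * ainner a u z := by
  simp [ainner, mulVec_smul, dotProduct_smul]

end aux

theorem stmt10 (a : Matrix (Fin 3) (Fin 3) ℝ) (ha : a.PosDef) (haSymm : a.IsSymm)
    (x : Fin 3 → ℝ) (hx : x ⬝ᵥ x = 1)
    (v : Fin 3 → ℝ) (hv : v ⬝ᵥ x = 0)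
    (Pinv_v : Fin 3 → ℝ)
    (hmin : IsAMinimizer (1 - vecMulVec x x) a v Pinv_v) :
    Pinv_v = v - ainner a v ((anorm a x)⁻¹ • x) • ((anorm a x)⁻¹ • x) ∧
      ainner a Pinv_v Pinv_v =
        ainner a v v - (ainner a ((anorm a x)⁻¹ • x) v) ^ 2 := by
  have hx0 : x ≠ 0 := by
    intro h; rw [h] at hx; simp at hx
  have hxx : 0 < ainner a x x := ainner_pos ha hx0
  -- abbreviations
  set X : ℝ := ainner a x x with hX
  set c : ℝ := ainner a v x / X with hc
  set w : Fin 3 → ℝ := v - c • x with hw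
  -- action of P
  have hP : ∀ u : Fin 3 → ℝ, (1 - vecMulVec x x) *ᵥ u = u - (x ⬝ᵥ u) • x := by
    intro u
    ext i
    simp [sub_mulVec, vecMulVec_apply, mulVec, dotProduct, Matrix.one_apply,
      Finset.sum_sub_distrib, Finset.mul_sum, mul_sub, mul_ite, mul_one, mul_zero,
      Finset.sum_ite_eq, mul_comm, mul_left_comm, mul_assoc]
  have hxv : x ⬝ᵥ v = 0 := by rwa [dotProduct_comm]
  -- w satisfies P w = v
  have hPw : (1 - vecMulVec x x) *ᵥ w = v := by
    rw [hP]
    have : x ⬝ᵥ w = -c := by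
      simp [hw, dotProduct_sub, dotProduct_smul, hxv, hx]
    rw [this, hw]
    module
  -- a-orthogonality of w and x
  have hwx : ainner a w x = 0 := by
    rw [hw, ainner_sub_left, ainner_smul_left, hc]
    field_simp
    simp [hX]
  have hxw : ainner a x w = 0 := by rw [ainner_symm haSymm]; exact hwx
  -- every solution is w + t x
  obtain ⟨hPstar, hminle⟩ := hmin
  have hkey : ∃ t : ℝ, Pinv_v = w + t • x := by
    have h1 := hP Pinv_v
    rw [hPstar] at h1
    refine ⟨x ⬝ᵥ Pinv_v + c, ?_⟩
    have h2 : Pinv_v - (x ⬝ᵥ Pinv_v) • x = v := h1.symm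
    rw [hw, ← h2]
    module
  obtain ⟨t, ht⟩ := hkey
  -- norms
  have hnorm : ainner a Pinv_v Pinv_v = ainner a w w + t ^ 2 * X := by
    rw [ht, ainner_add_left]
    unfold ainner
    simp only [mulVec_add, dotProduct_add, mulVec_smul, dotProduct_smul, smul_dotProduct,
      smul_eq_mul]
    have h1 : w ⬝ᵥ a⁻¹ *ᵥ x = 0 := hwx
    have h2 : x ⬝ᵥ a⁻¹ *ᵥ w = 0 := hxw
    rw [h1, h2, hX]
    unfold ainner
    ring
  -- minimality forces t = 0
  have hle := hminle w hPw
  have hww : 0 ≤ ainner a w w := ainner_nonneg ha w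
  have hsq : ainner a Pinv_v Pinv_v ≤ ainner a w w := by
    have h1 : Real.sqrt (ainner a Pinv_v Pinv_v) ≤ Real.sqrt (ainner a w w) := hle
    nlinarith [Real.sq_sqrt (ainner_nonneg ha Pinv_v), Real.sq_sqrt hww,
      Real.sqrt_nonneg (ainner a Pinv_v Pinv_v), Real.sqrt_nonneg (ainner a w w)]
  have ht0 : t = 0 := by
    have h2 : t ^ 2 ≤ 0 := by nlinarith
    have h3 : t ^ 2 = 0 := le_antisymm h2 (sq_nonneg t)
    exact pow_eq_zero_iff (by norm_num) |>.mp h3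
  have hPeq : Pinv_v = w := by rw [ht, ht0]; module
  -- identify w with the stated formula
  have hs2 : (anorm a x)⁻¹ ^ 2 = X⁻¹ := by
    rw [anorm, ← Real.sqrt_inv, Real.sq_sqrt (by positivity)]
  have hform : ainner a v ((anorm a x)⁻¹ • x) • ((anorm a x)⁻¹ • x) = c • x := by
    rw [ainner_smul_right, smul_smul]
    rw [hc]
    rw [div_eq_mul_inv, ← hs2]
    ring_nf
  constructor
  · rw [hPeq, hw, hform]
  · rw [hPeq]
    have hcross : ainner a ((anorm a x)⁻¹ • x) v = (anorm a x)⁻¹ * ainner a v x := by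
      rw [ainner_smul_left, ainner_symm haSymm]
    have hsymmxv : ainner a x v = ainner a v x := ainner_symm haSymm x v
    have hwwval : ainner a w w = ainner a v v - (ainner a v x) ^ 2 / X := by
      simp only [hw, ainner_sub_left, ainner_sub_right, ainner_smul_left,
        ainner_smul_right, hsymmxv, ← hX, hc]
      field_simp
      ring
    rw [hwwval, hcross, mul_pow, hs2, div_eq_mul_inv]
    ring
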